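/- Let G be a finite simple graph, f a proper 4-coloring of G, and a, b ∈ Fin 4 distinct colors with f⁻¹({a,b}) ≠ ∅, and let p = p_f(a,b) be the number of ab-Kempe chains of f. Then the set of coloring-partitions of G obtained from f by ab-Kempe changes, excluding the coloring-partition of f itself, has exactly 2^(p−1) − 1 elements. -/

import Mathlib

/-- A proper 4-coloring of a simple graph `G`. -/
def IsProperColoring {V : Type*} (G : SimpleGraph V) (f : V → Fin 4) : Prop :=
  ∀ ⦃u v : V⦄, G.Adj u v → f u ≠ f v

/-- `kempeCount G f a b` is the number of `ab`-Kempe chains of `f`, i.e. the number of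
connected components of the subgraph of `G` induced on `f⁻¹({a, b})`. -/
noncomputable def kempeCount {V : Type*} (G : SimpleGraph V) (f : V → Fin 4)
    (a b : Fin 4) : ℕ :=
  Nat.card ((G.induce {v | f v = a ∨ f v = b}).ConnectedComponent)

/-- Tutte's quantity `J_a(f) = p(a,b) + p(a,c) + p(a,d) - p(b,c) - p(b,d) - p(c,d)`,
where `{b, c, d} = Fin 4 \ {a}`. -/
noncomputable def Jcol {V : Type*} (G : SimpleGraph V) (f : V → Fin 4) (a : Fin 4) : ℤ :=
  (∑ x ∈ Finset.univ.erase a, (kempeCount G f a x : ℤ)) -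
    ∑ x ∈ Finset.univ.erase a,
      ∑ y ∈ (Finset.univ.erase a).filter (fun y => x < y), (kempeCount G f x y : ℤ)

/-- The coloring-partition of `f`: the set of its nonempty color classes. -/
def colPart {V : Type*} (f : V → Fin 4) : Set (Set V) :=
  {A | A.Nonempty ∧ ∃ c, A = f ⁻¹' {c}}

/-- `P` is a coloring-partition of `G` if it is the coloring-partition of some proper
4-coloring of `G`. -/
def IsColoringPartition {V : Type*} (G : SimpleGraph V) (P : Set (Set V)) : Prop :=
  ∃ f, IsProperColoring G f ∧ P = colPart f

/-- The set of all color classes of proper 4-colorings of `G`. -/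
def colorClasses {V : Type*} (G : SimpleGraph V) : Set (Set V) :=
  {A | A.Nonempty ∧ ∃ f c, IsProperColoring G f ∧ A = f ⁻¹' {c}}

/-- The 4-coloring complex `B(G)`: vertices are color classes of proper 4-colorings of `G`,
two distinct classes being adjacent iff they are color classes of a common proper
4-coloring. -/
def colorComplex {V : Type*} (G : SimpleGraph V) : SimpleGraph (colorClasses G) :=
  SimpleGraph.fromRel (fun A B => ∃ f, IsProperColoring G f ∧
    (∃ c, (A : Set V) = f ⁻¹' {c}) ∧ (∃ c, (B : Set V) = f ⁻¹' {c}))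

/-- Two proper 4-colorings are adjacent if they have a common (nonempty) color class. -/
def ColAdj {V : Type*} (G : SimpleGraph V) (f g : V → Fin 4) : Prop :=
  IsProperColoring G f ∧ IsProperColoring G g ∧
    ∃ c c', (f ⁻¹' {c}).Nonempty ∧ f ⁻¹' {c} = g ⁻¹' {c'}

/-- `W` is a union of `ab`-Kempe chains of `f`: it is a subset of `f⁻¹({a,b})` closed
under reachability in the induced subgraph on `f⁻¹({a,b})`. -/
def IsChainUnion {V : Type*} (G : SimpleGraph V) (f : V → Fin 4) (a b : Fin 4)
    (W : Set V) : Prop :=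
  W ⊆ {v | f v = a ∨ f v = b} ∧
    ∀ u v : {v | f v = a ∨ f v = b},
      (G.induce {v | f v = a ∨ f v = b}).Reachable u v → ((u : V) ∈ W ↔ (v : V) ∈ W)

open scoped Classical in
/-- The `ab`-Kempe change of `f` on the set `W`: swap the colors `a` and `b` on `W`. -/
noncomputable def kempeChange {V : Type*} (f : V → Fin 4) (a b : Fin 4) (W : Set V) :
    V → Fin 4 :=
  fun v => if v ∈ W then (if f v = a then b else if f v = b then a else f v) else f v

namespace KempeAux

variable {V : Type*}

theorem kempe_a {f : V → Fin 4} {a b : Fin 4} (hab : a ≠ b) {W : Set V}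
    (hW : W ⊆ {v | f v = a ∨ f v = b}) (v : V) :
    kempeChange f a b W v = a ↔ (f v = a ∧ v ∉ W) ∨ (f v = b ∧ v ∈ W) := by
  by_cases hv : v ∈ W
  · rcases hW hv with h | h <;> simp [kempeChange, hv, h, hab, hab.symm]
  · simp [kempeChange, hv]

theorem kempe_b {f : V → Fin 4} {a b : Fin 4} (hab : a ≠ b) {W : Set V}
    (hW : W ⊆ {v | f v = a ∨ f v = b}) (v : V) :
    kempeChange f a b W v = b ↔ (f v = b ∧ v ∉ W) ∨ (f v = a ∧ v ∈ W) := by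
  by_cases hv : v ∈ W
  · rcases hW hv with h | h <;> simp [kempeChange, hv, h, hab, hab.symm]
  · simp [kempeChange, hv]

theorem kempe_other {f : V → Fin 4} {a b : Fin 4} (hab : a ≠ b) {W : Set V}
    (hW : W ⊆ {v | f v = a ∨ f v = b}) {c : Fin 4} (hca : c ≠ a) (hcb : c ≠ b) (v : V) :
    kempeChange f a b W v = c ↔ f v = c := by
  by_cases hv : v ∈ W
  · rcases hW hv with h | h <;>
      simp [kempeChange, hv, h, hab, hab.symm, Ne.symm hca, Ne.symm hcb]
  · simp [kempeChange, hv]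

theorem kempeChange_empty (f : V → Fin 4) (a b : Fin 4) :
    kempeChange f a b (∅ : Set V) = f := by
  funext v; simp [kempeChange]

theorem colPart_eq {g g' : V → Fin 4}
    (h : ∀ c, ∃ c', g ⁻¹' {c} = g' ⁻¹' {c'}) (h' : ∀ c, ∃ c', g' ⁻¹' {c} = g ⁻¹' {c'}) :
    colPart g = colPart g' := by
  ext A
  constructor
  · rintro ⟨hne, c, rfl⟩
    obtain ⟨c', hc⟩ := h c
    exact ⟨hne, c', hc⟩
  · rintro ⟨hne, c, rfl⟩
    obtain ⟨c', hc⟩ := h' c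
    exact ⟨hne, c', hc⟩

theorem colPart_compl {f : V → Fin 4} {a b : Fin 4} (hab : a ≠ b) {W : Set V}
    (hW : W ⊆ {v | f v = a ∨ f v = b}) :
    colPart (kempeChange f a b ({v | f v = a ∨ f v = b} \ W)) =
      colPart (kempeChange f a b W) := by
  have hW2 : {v | f v = a ∨ f v = b} \ W ⊆ {v | f v = a ∨ f v = b} := Set.diff_subset
  have hA : (kempeChange f a b ({v | f v = a ∨ f v = b} \ W)) ⁻¹' {a}
      = (kempeChange f a b W) ⁻¹' {b} := by
    ext v
    simp only [Set.mem_preimage, Set.mem_singleton_iff]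
    rw [kempe_a hab hW2 v, kempe_b hab hW v]
    have hex : f v = a → f v = b → False := fun h h' => hab (h.symm.trans h')
    simp only [Set.mem_diff, Set.mem_setOf_eq]
    tauto
  have hB : (kempeChange f a b ({v | f v = a ∨ f v = b} \ W)) ⁻¹' {b}
      = (kempeChange f a b W) ⁻¹' {a} := by
    ext v
    simp only [Set.mem_preimage, Set.mem_singleton_iff]
    rw [kempe_b hab hW2 v, kempe_a hab hW v]
    have hex : f v = a → f v = b → False := fun h h' => hab (h.symm.trans h')
    simp only [Set.mem_diff, Set.mem_setOf_eq]
    tauto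
  have hO : ∀ c : Fin 4, c ≠ a → c ≠ b →
      (kempeChange f a b ({v | f v = a ∨ f v = b} \ W)) ⁻¹' {c}
        = (kempeChange f a b W) ⁻¹' {c} := by
    intro c hca hcb
    ext v
    simp only [Set.mem_preimage, Set.mem_singleton_iff]
    rw [kempe_other hab hW2 hca hcb v, kempe_other hab hW hca hcb v]
  apply colPart_eq
  · intro c
    by_cases hca : c = a
    · exact ⟨b, by rw [hca, hA]⟩
    by_cases hcb : c = b
    · exact ⟨a, by rw [hcb, hB]⟩
    · exact ⟨c, hO c hca hcb⟩
  · intro c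
    by_cases hca : c = a
    · exact ⟨b, by rw [hca, ← hB]⟩
    by_cases hcb : c = b
    · exact ⟨a, by rw [hcb, ← hA]⟩
    · exact ⟨c, (hO c hca hcb).symm⟩

theorem key_lemma {f : V → Fin 4} {a b : Fin 4} (hab : a ≠ b) {W₁ W₂ : Set V}
    (h1 : W₁ ⊆ {v | f v = a ∨ f v = b}) (h2 : W₂ ⊆ {v | f v = a ∨ f v = b})
    (hcol : colPart (kempeChange f a b W₁) = colPart (kempeChange f a b W₂))
    {c : Fin 4} (hc : c = a ∨ c = b) (hne : ((kempeChange f a b W₁) ⁻¹' {c}).Nonempty) :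
    (kempeChange f a b W₁) ⁻¹' {c} = (kempeChange f a b W₂) ⁻¹' {a} ∨
    (kempeChange f a b W₁) ⁻¹' {c} = (kempeChange f a b W₂) ⁻¹' {b} := by
  have hm : (kempeChange f a b W₁) ⁻¹' {c} ∈ colPart (kempeChange f a b W₂) := by
    rw [← hcol]; exact ⟨hne, c, rfl⟩
  obtain ⟨-, c', hc'⟩ := hm
  by_cases h : c' = a
  · left; rw [hc', h]
  by_cases h' : c' = b
  · right; rw [hc', h']
  · exfalso
    obtain ⟨x, hx⟩ := hne
    have hx1 : kempeChange f a b W₁ x = c := hx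
    have hx2 : kempeChange f a b W₂ x = c' := by
      have : x ∈ (kempeChange f a b W₂) ⁻¹' {c'} := hc' ▸ hx
      exact this
    have hfx : f x = a ∨ f x = b := by
      rcases hc with rfl | rfl
      · rcases (kempe_a hab h1 x).mp hx1 with ⟨h, _⟩ | ⟨h, _⟩
        · exact Or.inl h
        · exact Or.inr h
      · rcases (kempe_b hab h1 x).mp hx1 with ⟨h, _⟩ | ⟨h, _⟩
        · exact Or.inr h
        · exact Or.inl h
    have hfc : f x = c' := (kempe_other hab h2 h h' x).mp hx2
    rcases hfx with h4 | h4
    · exact h (hfc.symm.trans h4)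
    · exact h' (hfc.symm.trans h4)

theorem fiber {f : V → Fin 4} {a b : Fin 4} (hab : a ≠ b) {W W' : Set V}
    (hW : W ⊆ {v | f v = a ∨ f v = b}) (hW' : W' ⊆ {v | f v = a ∨ f v = b})
    (h : colPart (kempeChange f a b W) = colPart (kempeChange f a b W')) :
    W' = W ∨ W' = {v | f v = a ∨ f v = b} \ W := by
  set g := kempeChange f a b W with hg
  set g' := kempeChange f a b W' with hg'
  rcases Set.eq_empty_or_nonempty (g' ⁻¹' {a}) with hE | hNE
  · -- g'⁻¹{a} empty : W' = f⁻¹{a}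
    have hW'A : ∀ v, v ∈ W' ↔ f v = a := by
      intro v
      have hv : ¬ ((f v = a ∧ v ∉ W') ∨ (f v = b ∧ v ∈ W')) := by
        intro hcontra
        have : g' v = a := (kempe_a hab hW' v).mpr hcontra
        exact Set.eq_empty_iff_forall_notMem.mp hE v this
      have hex : f v = a → f v = b → False := fun h h' => hab (h.symm.trans h')
      constructor
      · intro hvW'
        rcases hW' hvW' with h5 | h5
        · exact h5
        · exact absurd (Or.inr ⟨h5, hvW'⟩) hv
      · intro hfa
        by_contra hnW'
        exact hv (Or.inl ⟨hfa, hnW'⟩)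
    rcases Set.eq_empty_or_nonempty (g ⁻¹' {a}) with hE2 | hNE2
    · -- also W = f⁻¹{a}, so W' = W
      left
      have hWA : ∀ v, v ∈ W ↔ f v = a := by
        intro v
        have hv : ¬ ((f v = a ∧ v ∉ W) ∨ (f v = b ∧ v ∈ W)) := by
          intro hcontra
          have : g v = a := (kempe_a hab hW v).mpr hcontra
          exact Set.eq_empty_iff_forall_notMem.mp hE2 v this
        constructor
        · intro hvW
          rcases hW hvW with h5 | h5
          · exact h5
          · exact absurd (Or.inr ⟨h5, hvW⟩) hv
        · intro hfa
          by_contra hnW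
          exact hv (Or.inl ⟨hfa, hnW⟩)
      ext v; rw [hW'A v, hWA v]
    · -- g⁻¹{a} = g'⁻¹{b} = everything; W = f⁻¹{b}
      right
      rcases key_lemma hab hW hW' h (Or.inl rfl) hNE2 with h5 | h5
    -- h5 : g⁻¹{a} = g'⁻¹{a} : contradiction
      · exfalso
        rw [← hg, ← hg'] at h5
        rw [h5, hE] at hNE2
        exact Set.not_nonempty_empty hNE2
      · rw [← hg, ← hg'] at h5
        have hWB : ∀ v, v ∈ W ↔ f v = b := by
          intro v
          have hiff : g v = a ↔ g' v = b := by
            constructor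
            · intro hv
              have : v ∈ g' ⁻¹' {b} := h5 ▸ (hv : v ∈ g ⁻¹' {a})
              exact this
            · intro hv
              have : v ∈ g ⁻¹' {a} := h5 ▸ (hv : v ∈ g' ⁻¹' {b})
              exact this
          rw [kempe_a hab hW v, kempe_b hab hW' v] at hiff
          have hex : f v = a → f v = b → False := fun h h' => hab (h.symm.trans h')
          constructor
          · intro hvW
            rcases hW hvW with h6 | h6
            · -- f v = a, v ∈ W : then char_a g false; char_b g' : (b∧∉W')∨(a∧∈W')
              -- v ∈ W' ↔ f v = a holds; so second disjunct true, so g' v = b, so g v = a: f v=a∧v∉W contra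
              have hvW' : v ∈ W' := (hW'A v).mpr h6
              have h7 := hiff.mpr (Or.inr ⟨h6, hvW'⟩)
              rcases h7 with ⟨_, h8⟩ | ⟨h8, _⟩
              · exact absurd hvW h8
              · exact absurd (hex h6 h8) id
            · exact h6
          · intro hfb
            have hnW' : v ∉ W' := fun hv => hex ((hW'A v).mp hv) hfb
            have h7 := hiff.mpr (Or.inl ⟨hfb, hnW'⟩)
            rcases h7 with ⟨h8, _⟩ | ⟨_, h8⟩
            · exact absurd (hex h8 hfb) id
            · exact h8
        ext v
        simp only [Set.mem_diff, Set.mem_setOf_eq]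
        rw [hW'A v, hWB v]
        have hex : f v = a → f v = b → False := fun h h' => hab (h.symm.trans h')
        tauto
  · -- g'⁻¹{a} nonempty
    rcases key_lemma hab hW' hW h.symm (Or.inl rfl) hNE with h5 | h5
    · -- g'⁻¹{a} = g⁻¹{a} ⟹ W' = W
      left
      rw [← hg, ← hg'] at h5
      ext v
      have hiff : g' v = a ↔ g v = a := by
        constructor
        · intro hv; exact (h5 ▸ (hv : v ∈ g' ⁻¹' {a}) : v ∈ g ⁻¹' {a})
        · intro hv; exact (h5 ▸ (hv : v ∈ g ⁻¹' {a}) : v ∈ g' ⁻¹' {a})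
      rw [kempe_a hab hW' v, kempe_a hab hW v] at hiff
      have hex : f v = a → f v = b → False := fun h h' => hab (h.symm.trans h')
      constructor
      · intro hv
        rcases hW' hv with h6 | h6 <;> tauto
      · intro hv
        rcases hW hv with h6 | h6 <;> tauto
    · -- g'⁻¹{a} = g⁻¹{b} ⟹ W' = U \ W
      right
      rw [← hg, ← hg'] at h5
      ext v
      have hiff : g' v = a ↔ g v = b := by
        constructor
        · intro hv; exact (h5 ▸ (hv : v ∈ g' ⁻¹' {a}) : v ∈ g ⁻¹' {b})
        · intro hv; exact (h5 ▸ (hv : v ∈ g ⁻¹' {b}) : v ∈ g' ⁻¹' {a})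
      rw [kempe_a hab hW' v, kempe_b hab hW v] at hiff
      have hex : f v = a → f v = b → False := fun h h' => hab (h.symm.trans h')
      simp only [Set.mem_diff, Set.mem_setOf_eq]
      constructor
      · intro hv
        rcases hW' hv with h6 | h6 <;> tauto
      · rintro ⟨h6, h7⟩
        rcases h6 with h6 | h6 <;> tauto

end KempeAux

namespace KempeAux

variable {V : Type*}

/-- The union of the chains in `T`. -/
def chi (G : SimpleGraph V) (f : V → Fin 4) (a b : Fin 4)
    (T : Set (G.induce {v | f v = a ∨ f v = b}).ConnectedComponent) : Set V :=
  {v | ∃ h : v ∈ {v | f v = a ∨ f v = b},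
    (G.induce {v | f v = a ∨ f v = b}).connectedComponentMk ⟨v, h⟩ ∈ T}

variable {G : SimpleGraph V} {f : V → Fin 4} {a b : Fin 4}

theorem chi_subset (T : Set (G.induce {v | f v = a ∨ f v = b}).ConnectedComponent) :
    chi G f a b T ⊆ {v | f v = a ∨ f v = b} := fun _ hv => hv.1

theorem chi_mem (T : Set (G.induce {v | f v = a ∨ f v = b}).ConnectedComponent)
    (v : V) (h : v ∈ {v | f v = a ∨ f v = b}) :
    v ∈ chi G f a b T ↔
      (G.induce {v | f v = a ∨ f v = b}).connectedComponentMk ⟨v, h⟩ ∈ T := by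
  constructor
  · rintro ⟨h', hT⟩; exact hT
  · intro hT; exact ⟨h, hT⟩

theorem chi_chainUnion (T : Set (G.induce {v | f v = a ∨ f v = b}).ConnectedComponent) :
    IsChainUnion G f a b (chi G f a b T) := by
  refine ⟨chi_subset T, ?_⟩
  intro u v huv
  have hc : (G.induce {v | f v = a ∨ f v = b}).connectedComponentMk u =
      (G.induce {v | f v = a ∨ f v = b}).connectedComponentMk v :=
    SimpleGraph.ConnectedComponent.sound huv
  rw [chi_mem T u u.2, chi_mem T v v.2]
  rw [show (⟨(u : V), u.2⟩ : {v | f v = a ∨ f v = b}) = u from rfl,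
    show (⟨(v : V), v.2⟩ : {v | f v = a ∨ f v = b}) = v from rfl, hc]

theorem chi_inj : Function.Injective (chi G f a b) := by
  intro T T' h
  ext K
  refine SimpleGraph.ConnectedComponent.ind (fun u => ?_) K
  rw [← chi_mem T (u : V) u.2, ← chi_mem T' (u : V) u.2, h]

theorem chainUnion_eq_chi {W : Set V} (hW : IsChainUnion G f a b W) :
    ∃ T, chi G f a b T = W := by
  refine ⟨{K | ∃ u : {v | f v = a ∨ f v = b},
    (G.induce {v | f v = a ∨ f v = b}).connectedComponentMk u = K ∧ (u : V) ∈ W}, ?_⟩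
  ext v
  constructor
  · rintro ⟨h, u, hu, huW⟩
    have : (G.induce {v | f v = a ∨ f v = b}).Reachable u ⟨v, h⟩ :=
      SimpleGraph.ConnectedComponent.eq.mp hu
    exact (hW.2 u ⟨v, h⟩ this).mp huW
  · intro hvW
    exact ⟨hW.1 hvW, ⟨v, hW.1 hvW⟩, rfl, hvW⟩

theorem chi_compl (T : Set (G.induce {v | f v = a ∨ f v = b}).ConnectedComponent) :
    chi G f a b Tᶜ = {v | f v = a ∨ f v = b} \ chi G f a b T := by
  ext v
  constructor
  · rintro ⟨h, hT⟩
    exact ⟨h, fun hmem => hT ((chi_mem T v h).mp hmem)⟩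
  · rintro ⟨h, hn⟩
    exact ⟨h, fun hT => hn ⟨h, hT⟩⟩

theorem chi_empty : chi G f a b ∅ = (∅ : Set V) := by
  ext v; simp [chi]

theorem chi_nonempty {T : Set (G.induce {v | f v = a ∨ f v = b}).ConnectedComponent}
    (hT : T.Nonempty) : (chi G f a b T).Nonempty := by
  obtain ⟨K, hK⟩ := hT
  revert hK
  refine SimpleGraph.ConnectedComponent.ind (fun u hu => ?_) K
  exact ⟨(u : V), u.2, hu⟩

theorem card_aux {α : Type*} [Finite α] (x : α) :
    {T : Set α | x ∉ T ∧ T.Nonempty}.ncard = 2 ^ (Nat.card α - 1) - 1 := by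
  classical
  haveI := Fintype.ofFinite α
  have h1 : {T : Set α | x ∉ T ∧ T.Nonempty} = {T : Set α | x ∉ T} \ {∅} := by
    ext T
    simp only [Set.mem_setOf_eq, Set.mem_diff, Set.mem_singleton_iff,
      Set.nonempty_iff_ne_empty]
  have hfin : {T : Set α | x ∉ T}.Finite := Set.toFinite _
  have hmem : (∅ : Set α) ∈ {T : Set α | x ∉ T} := by simp
  have h2 : {T : Set α | x ∉ T}.ncard = 2 ^ (Nat.card α - 1) := by
    have e : {T : Set α | x ∉ T} ≃ Set {y : α // y ≠ x} :=
      { toFun := fun T => {y | (y : α) ∈ (T : Set α)}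
        invFun := fun S => ⟨Subtype.val '' S, by
          rintro ⟨y, -, hy⟩
          exact y.2 hy⟩
        left_inv := fun T => by
          ext v
          simp only [Set.mem_image, Set.mem_setOf_eq]
          constructor
          · rintro ⟨y, hy, rfl⟩; exact hy
          · intro hv
            have hvx : v ≠ x := fun h => T.2 (h ▸ hv)
            exact ⟨⟨v, hvx⟩, hv, rfl⟩
        right_inv := fun S => by
          ext y
          simp only [Set.mem_setOf_eq, Set.mem_image]
          constructor
          · rintro ⟨z, hz, hzy⟩
            have : z = y := Subtype.ext hzy
            exact this ▸ hz
          · intro hy; exact ⟨y, hy, rfl⟩ }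
    rw [← Nat.card_coe_set_eq, Nat.card_congr e, Nat.card_eq_fintype_card,
      Fintype.card_set]
    congr 1
    rw [Nat.card_eq_fintype_card]
    have := Fintype.card_subtype_compl (fun y : α => y = x)
    simp only [Fintype.card_subtype_eq] at this
    convert this using 2
  rw [h1, Set.ncard_diff_singleton_of_mem hmem, h2]

end KempeAux


open KempeAux in
/-- If `f⁻¹({a,b}) ≠ ∅` and `p = p_f(a,b)` is the number of `ab`-Kempe chains, then the
set of coloring-partitions obtained from `f` by `ab`-Kempe changes, other than the
coloring-partition of `f` itself, has exactly `2 ^ (p - 1) - 1` elements. -/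
theorem kempe_change_partitions_card {V : Type*} [Fintype V] (G : SimpleGraph V)
    (f : V → Fin 4) (hf : IsProperColoring G f) (a b : Fin 4) (hab : a ≠ b)
    (hne : {v | f v = a ∨ f v = b}.Nonempty) :
    ({P : Set (Set V) | ∃ W, IsChainUnion G f a b W ∧ P = colPart (kempeChange f a b W)}
        \ {colPart f}).ncard = 2 ^ (kempeCount G f a b - 1) - 1 := by
  classical
  obtain ⟨v0, hv0⟩ := hne
  set K0 := (G.induce {v | f v = a ∨ f v = b}).connectedComponentMk ⟨v0, hv0⟩ with hK0
  have hchiK0 : ∀ T, v0 ∈ chi G f a b T ↔ K0 ∈ T := fun T => chi_mem T v0 hv0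
  have hcolf : colPart (kempeChange f a b (∅ : Set V)) = colPart f := by
    rw [kempeChange_empty]
  have himg : {P : Set (Set V) | ∃ W, IsChainUnion G f a b W ∧
        P = colPart (kempeChange f a b W)} \ {colPart f}
      = (fun T => colPart (kempeChange f a b (chi G f a b T))) ''
        {T | K0 ∉ T ∧ T.Nonempty} := by
    apply Set.Subset.antisymm
    · rintro P ⟨⟨W, hWcu, rfl⟩, hPf⟩
      simp only [Set.mem_singleton_iff] at hPf
      obtain ⟨T, rfl⟩ := chainUnion_eq_chi hWcu
      by_cases hK : K0 ∈ T
      · refine ⟨Tᶜ, ⟨by simp [hK], ?_⟩, ?_⟩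
        · rcases Set.eq_empty_or_nonempty Tᶜ with hemp | hne'
          · exfalso
            apply hPf
            have hTuniv : T = Set.univ := by
              rw [← Set.compl_empty]; rw [← hemp, compl_compl]
            have hchiu : chi G f a b T = {v | f v = a ∨ f v = b} := by
              ext v
              constructor
              · exact fun hv => chi_subset T hv
              · intro hv
                rw [chi_mem T v hv, hTuniv]
                exact Set.mem_univ _
            rw [hchiu]
            have h2 := colPart_compl (f := f) (a := a) (b := b) hab
              (Set.empty_subset {v | f v = a ∨ f v = b})
            rw [Set.diff_empty] at h2
            rw [h2, hcolf]
          · exact hne'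
        · show colPart (kempeChange f a b (chi G f a b Tᶜ))
            = colPart (kempeChange f a b (chi G f a b T))
          rw [chi_compl, colPart_compl hab (chi_subset T)]
      · refine ⟨T, ⟨hK, ?_⟩, rfl⟩
        rcases Set.eq_empty_or_nonempty T with rfl | hT
        · exfalso
          apply hPf
          rw [chi_empty, hcolf]
        · exact hT
    · rintro P ⟨T, ⟨hK, hTne⟩, rfl⟩
      refine ⟨⟨chi G f a b T, chi_chainUnion T, rfl⟩, ?_⟩
      simp only [Set.mem_singleton_iff]
      intro hcol
      have hcol' : colPart (kempeChange f a b (∅ : Set V))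
          = colPart (kempeChange f a b (chi G f a b T)) := by
        rw [hcolf, hcol]
      rcases fiber hab (Set.empty_subset _) (chi_subset T) hcol' with h1 | h1
      · exact (chi_nonempty hTne).ne_empty h1
      · rw [Set.diff_empty] at h1
        apply hK
        rw [← hchiK0 T, h1]
        exact hv0
  have hinj : Set.InjOn (fun T => colPart (kempeChange f a b (chi G f a b T)))
      {T | K0 ∉ T ∧ T.Nonempty} := by
    rintro T ⟨hT, -⟩ T' ⟨hT', -⟩ h
    rcases fiber hab (chi_subset T) (chi_subset T') h with h1 | h1
    · exact (chi_inj h1).symm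
    · exfalso
      rw [← chi_compl] at h1
      have hTT : T' = Tᶜ := chi_inj h1
      rw [hTT] at hT'
      exact hT' (by simpa using hT)
  rw [himg, Set.ncard_image_of_injOn hinj]
  exact card_aux K0
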